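/- In Minkowski space $\mathbb{R}^{1,2}$ with $\eta(V,V) = -V_t^2 + V_x^2 + V_y^2$, fix $C > 2$ and $p \neq 0$. Let $V = (C p^3 \sqrt{1+p^2},\; C p^4,\; (C-4) p^3)$. Then $\eta(V,V) = p^6(16 - 8C) < 0$, i.e. $V$ is timelike. Consequently the straight segment from the cusp wavefront point $(0, -3p^2, 2p^3)$ to the point $(0,-3p^2,-2p^3) + C p^3 \cdot (\sqrt{1+p^2},\, p,\, 1)$, which lies on the null ray emanating from the opposite cusp branch, is timelike; hence the cusp ($A_2$) big wavefront is not achronal. -/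
import Mathlib


/-- The Minkowski form `η(V,V) = -V₀² + V₁² + V₂²` on `ℝ^{1,2}`. -/
noncomputable def mink3Sq (V : Fin 3 → ℝ) : ℝ := -(V 0) ^ 2 + (V 1) ^ 2 + (V 2) ^ 2

/-- The explicit timelike chord demonstrating that the cusp (`A₂`) big wavefront is
not achronal: with `C > 2`, `p ≠ 0`, the displacement `V` from the cusp point
`(0,−3p²,2p³)` to the point affine distance `Cp³` along the null generator through
`(0,−3p²,−2p³)` satisfies `η(V,V) = p⁶(16−8C) < 0`. -/
theorem a2_wavefront_not_achronal (C p : ℝ) (hC : 2 < C) (hp : p ≠ 0) :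
    let V : Fin 3 → ℝ :=
      ![C * p ^ 3 * Real.sqrt (1 + p ^ 2), C * p ^ 4, (C - 4) * p ^ 3]
    (((![(0 : ℝ), -3 * p ^ 2, -2 * p ^ 3] + (C * p ^ 3) • ![Real.sqrt (1 + p ^ 2), p, 1])
        - ![(0 : ℝ), -3 * p ^ 2, 2 * p ^ 3]) = V) ∧
    mink3Sq V = p ^ 6 * (16 - 8 * C) ∧ mink3Sq V < 0 := by
  intro V
  have hsq : Real.sqrt (1 + p ^ 2) ^ 2 = 1 + p ^ 2 :=
    Real.sq_sqrt (by positivity)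
  have heq : mink3Sq V = p ^ 6 * (16 - 8 * C) := by
    simp only [mink3Sq, V, Matrix.cons_val_zero, Matrix.cons_val_one, Matrix.head_cons,
      Matrix.cons_val_two, Matrix.tail_cons]
    have : (C * p ^ 3 * Real.sqrt (1 + p ^ 2)) ^ 2 = C ^ 2 * p ^ 6 * (1 + p ^ 2) := by
      rw [mul_pow, hsq]; ring
    rw [this]; ring
  refine ⟨?_, heq, ?_⟩
  · funext i
    fin_cases i <;> simp [V] <;> ring
  · rw [heq]
    have h6 : 0 < p ^ 6 := by positivity
    nlinarith
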